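/- Let G = ℤ/pℤ ⊕ ℤ/pℤ with generators τ₁, τ₂ and tᵢ = τᵢ−1. In ℤ[G], the kernel of the multiplication map η ↦ η·t₁t₂ equals ℤ[G]·T₁ + ℤ[G]·T₂, and the image ℤ[G]·t₁t₂ is a free ℤ-module of rank (p−1)². -/

import Mathlib

open MonoidAlgebra

abbrev GrpP (p : ℕ) := Multiplicative (ZMod p × ZMod p)
abbrev GA (p : ℕ) := MonoidAlgebra ℤ (GrpP p)

/-- The group element `τ₁^a τ₂^b` viewed in the group ring `ℤ[G]`. -/
noncomputable def τ (p : ℕ) (v : ZMod p × ZMod p) : GA p :=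
  MonoidAlgebra.of ℤ (GrpP p) (Multiplicative.ofAdd v)

/-- The "trace" element `1 + σ + ⋯ + σ^{p-1}` for `σ = τ₁^a τ₂^b`. -/
noncomputable def tr (p : ℕ) (v : ZMod p × ZMod p) : GA p :=
  ∑ k ∈ Finset.range p, τ p v ^ k

/-- The sum of all group elements `T_G = ∑_{g ∈ G} g`. -/
noncomputable def TG (p : ℕ) [NeZero p] : GA p :=
  ∑ g : GrpP p, MonoidAlgebra.of ℤ (GrpP p) g

open Multiplicative Finsupp

variable {p : ℕ}

instance (p : ℕ) : CoeFun (GA p) (fun _ => GrpP p → ℤ) := ⟨fun η => η.coeff⟩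

lemma tau_mul (u v : ZMod p × ZMod p) : τ p u * τ p v = τ p (u + v) := by
  simp [τ, ← map_mul, ← ofAdd_add]

lemma tau_pow (k : ℕ) (v : ZMod p × ZMod p) : τ p v ^ k = τ p ((k : ZMod p) • v) := by
  induction k with
  | zero => simp [τ, MonoidAlgebra.one_def]
  | succ n ih =>
    rw [pow_succ, ih, tau_mul]
    congr 1
    push_cast
    module

lemma tau_zero : τ p 0 = 1 := by simp [τ, MonoidAlgebra.one_def]

lemma tau_pow_p (v : ZMod p × ZMod p) : τ p v ^ p = 1 := by
  rw [tau_pow]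
  simp [tau_zero]

lemma tr_mul (v : ZMod p × ZMod p) : tr p v * (τ p v - 1) = 0 := by
  rw [tr, geom_sum_mul, tau_pow_p, sub_self]

lemma tr_mul_tau (v : ZMod p × ZMod p) : tr p v * τ p v = tr p v := by
  have := tr_mul (p := p) v
  rw [mul_sub, mul_one, sub_eq_zero] at this
  exact this

-- evaluation
lemma mul_tau_apply (η : GA p) (v w : ZMod p × ZMod p) :
    (η * τ p v) (ofAdd w) = η (ofAdd (w - v)) := by
  rw [τ, MonoidAlgebra.of_apply, MonoidAlgebra.mul_single_apply]
  simp [← ofAdd_neg, ← ofAdd_add, sub_eq_add_neg]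

lemma sum_range_zmod [NeZero p] {M : Type*} [AddCommMonoid M] (f : ZMod p → M) :
    ∑ k ∈ Finset.range p, f (k : ZMod p) = ∑ x : ZMod p, f x := by
  refine Finset.sum_bij' (fun a _ => (a : ZMod p)) (fun x _ => x.val) ?_ ?_ ?_ ?_ ?_ <;>
    intros <;> first
      | rfl
      | exact Finset.mem_univ _
      | exact Finset.mem_range.2 (ZMod.val_lt _)
      | exact ZMod.val_cast_of_lt (Finset.mem_range.1 ‹_›)
      | simp [ZMod.natCast_val, ZMod.cast_id]

lemma tr1_eq [NeZero p] : tr p (1, 0) = ∑ x : ZMod p, τ p (x, 0) := by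
  rw [tr, ← sum_range_zmod (f := fun x => τ p (x, 0))]
  refine Finset.sum_congr rfl fun k _ => ?_
  rw [tau_pow]
  congr 1
  simp [Prod.ext_iff]

lemma tr2_eq [NeZero p] : tr p (0, 1) = ∑ x : ZMod p, τ p (0, x) := by
  rw [tr, ← sum_range_zmod (f := fun x => τ p (0, x))]
  refine Finset.sum_congr rfl fun k _ => ?_
  rw [tau_pow]
  congr 1
  simp [Prod.ext_iff]

lemma sum_single_apply {ι : Type*} [Fintype ι] (g : ι → GrpP p) (a : ι → ℤ) (w : GrpP p) :
    (∑ i : ι, MonoidAlgebra.single (g i) (a i)) w = ∑ i : ι, if g i = w then a i else 0 := by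
  rw [MonoidAlgebra.coeff_sum, Finsupp.finset_sum_apply]
  exact Finset.sum_congr rfl fun i _ => Finsupp.single_apply

lemma eval_double [NeZero p] (F : ZMod p × ZMod p → ℤ) (w : ZMod p × ZMod p) :
    (∑ v : ZMod p × ZMod p, MonoidAlgebra.single (Multiplicative.ofAdd v) (F v))
      (Multiplicative.ofAdd w) = F w := by
  rw [sum_single_apply]
  have : ∀ v : ZMod p × ZMod p,
      (if Multiplicative.ofAdd v = Multiplicative.ofAdd w then F v else 0)
        = if v = w then F v else 0 := by
    intro v; simp
  simp only [this]
  simp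

lemma A_mul_tr1 [NeZero p] (a : ZMod p → ℤ) :
    (∑ n : ZMod p, MonoidAlgebra.single (Multiplicative.ofAdd ((0 : ZMod p), n)) (a n))
        * tr p (1, 0)
      = ∑ v : ZMod p × ZMod p, MonoidAlgebra.single (Multiplicative.ofAdd v) (a v.2) := by
  rw [tr1_eq, Finset.sum_mul_sum, Fintype.sum_prod_type, Finset.sum_comm]
  refine Finset.sum_congr rfl fun x _ => Finset.sum_congr rfl fun n _ => ?_
  rw [τ, MonoidAlgebra.of_apply, MonoidAlgebra.single_mul_single]
  rw [mul_one]
  congr 1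
  rw [← ofAdd_add]
  congr 1
  simp

lemma B_mul_tr2 [NeZero p] (a : ZMod p → ℤ) :
    (∑ m : ZMod p, MonoidAlgebra.single (Multiplicative.ofAdd (m, (0 : ZMod p))) (a m))
        * tr p (0, 1)
      = ∑ v : ZMod p × ZMod p, MonoidAlgebra.single (Multiplicative.ofAdd v) (a v.1) := by
  rw [tr2_eq, Finset.sum_mul_sum, Fintype.sum_prod_type]
  refine Finset.sum_congr rfl fun x _ => Finset.sum_congr rfl fun n _ => ?_
  rw [τ, MonoidAlgebra.of_apply, MonoidAlgebra.single_mul_single]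
  rw [mul_one]
  congr 1
  rw [← ofAdd_add]
  congr 1
  simp

lemma mem_span_of_rect [NeZero p] (η : GA p) (b : ZMod p × ZMod p)
    (h : ∀ v : ZMod p × ZMod p,
      η (Multiplicative.ofAdd v) = η (Multiplicative.ofAdd (b.1, v.2))
        + η (Multiplicative.ofAdd (v.1, b.2)) - η (Multiplicative.ofAdd b)) :
    η ∈ Ideal.span ({tr p (1, 0), tr p (0, 1)} : Set (GA p)) := by
  rw [Ideal.mem_span_pair]
  refine ⟨∑ n : ZMod p, MonoidAlgebra.single (Multiplicative.ofAdd ((0 : ZMod p), n))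
        (η (Multiplicative.ofAdd (b.1, n))),
      ∑ m : ZMod p, MonoidAlgebra.single (Multiplicative.ofAdd (m, (0 : ZMod p)))
        (η (Multiplicative.ofAdd (m, b.2)) - η (Multiplicative.ofAdd b)), ?_⟩
  rw [A_mul_tr1, B_mul_tr2]
  apply MonoidAlgebra.ext
  apply Finsupp.ext
  intro g
  have hg : g = Multiplicative.ofAdd (toAdd g) := rfl
  rw [hg, MonoidAlgebra.coeff_add, Finsupp.add_apply, eval_double, eval_double]
  rw [h (toAdd g)]
  ring

lemma span_mul_zero [NeZero p] (η : GA p)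
    (hη : η ∈ Ideal.span ({tr p (1, 0), tr p (0, 1)} : Set (GA p))) :
    η * ((τ p (1, 0) - 1) * (τ p (0, 1) - 1)) = 0 := by
  rw [Ideal.mem_span_pair] at hη
  obtain ⟨u, v, rfl⟩ := hη
  have h1 := tr_mul (p := p) (1, 0)
  have h2 := tr_mul (p := p) (0, 1)
  linear_combination (u * (τ p (0, 1) - 1)) * h1 + (v * (τ p (1, 0) - 1)) * h2

lemma mul_zero_mem_span [NeZero p] (η : GA p)
    (hq : η * ((τ p (1, 0) - 1) * (τ p (0, 1) - 1)) = 0) :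
    η ∈ Ideal.span ({tr p (1, 0), tr p (0, 1)} : Set (GA p)) := by
  set c : ZMod p × ZMod p → ℤ := fun v => η (Multiplicative.ofAdd v) with hc
  have expand : η * ((τ p (1, 0) - 1) * (τ p (0, 1) - 1))
      = η * τ p (1, 1) - η * τ p (1, 0) - η * τ p (0, 1) + η := by
    have : τ p (1, 0) * τ p (0, 1) = τ p (1, 1) := by
      rw [tau_mul]; norm_num
    linear_combination η * this
  rw [expand] at hq
  have key : ∀ a b : ZMod p, c (a + 1, b + 1)
      = c (a, b + 1) + c (a + 1, b) - c (a, b) := by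
    intro a b
    have h0 : (η * τ p (1, 1) - η * τ p (1, 0) - η * τ p (0, 1) + η)
        (Multiplicative.ofAdd (a + 1, b + 1)) = 0 := by
      rw [hq]; rfl
    rw [MonoidAlgebra.coeff_add, MonoidAlgebra.coeff_sub, MonoidAlgebra.coeff_sub,
      Finsupp.add_apply, Finsupp.sub_apply, Finsupp.sub_apply,
      mul_tau_apply, mul_tau_apply, mul_tau_apply] at h0
    have e1 : ((a + 1 : ZMod p), (b + 1 : ZMod p)) - (1, 1) = (a, b) := by
      simp [Prod.ext_iff]
    have e2 : ((a + 1 : ZMod p), (b + 1 : ZMod p)) - (1, 0) = (a, b + 1) := by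
      simp [Prod.ext_iff]
    have e3 : ((a + 1 : ZMod p), (b + 1 : ZMod p)) - (0, 1) = (a + 1, b) := by
      simp [Prod.ext_iff]
    rw [e1, e2, e3] at h0
    have h0' : c (a, b) - c (a, b + 1) - c (a + 1, b) + c (a + 1, b + 1) = 0 := h0
    linarith
  have main : ∀ n m : ℕ, c ((m : ZMod p), (n : ZMod p))
      = c (0, (n : ZMod p)) + c ((m : ZMod p), 0) - c (0, 0) := by
    intro n
    induction n with
    | zero =>
      intro m
      push_cast
      ring
    | succ n ih =>
      intro m
      induction m with
      | zero =>
        push_cast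
        ring
      | succ m ih2 =>
        have hk := key (m : ZMod p) (n : ZMod p)
        have i1 := ih (m + 1)
        have i2 := ih m
        push_cast at hk i1 i2 ih2 ⊢
        linarith
  apply mem_span_of_rect η (0, 0)
  intro v
  have := main v.2.val v.1.val
  simpa [hc, ZMod.natCast_val, ZMod.cast_id] using this

noncomputable def ev (p : ℕ) (w : GrpP p) : GA p →ₗ[ℤ] ℤ where
  toFun η := η w
  map_add' a b := Finsupp.add_apply a.coeff b.coeff w
  map_smul' z a := by
    show (z • a).coeff w = z • a.coeff w
    exact MonoidAlgebra.coeff_smul_apply z a w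

@[simp] lemma ev_apply (w : GrpP p) (η : GA p) : ev p w η = η w := rfl

noncomputable def psi (p : ℕ) : GA p →ₗ[ℤ] (Fin (p - 1) × Fin (p - 1) → ℤ) :=
  LinearMap.pi fun ij =>
    ev p (Multiplicative.ofAdd ((ij.1.val : ZMod p), (ij.2.val : ZMod p)))
      - ev p (Multiplicative.ofAdd (((p - 1 : ℕ) : ZMod p), (ij.2.val : ZMod p)))
      - ev p (Multiplicative.ofAdd ((ij.1.val : ZMod p), ((p - 1 : ℕ) : ZMod p)))
      + ev p (Multiplicative.ofAdd (((p - 1 : ℕ) : ZMod p), ((p - 1 : ℕ) : ZMod p)))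

lemma psi_apply (η : GA p) (ij : Fin (p - 1) × Fin (p - 1)) :
    psi p η ij = η (Multiplicative.ofAdd ((ij.1.val : ZMod p), (ij.2.val : ZMod p)))
      - η (Multiplicative.ofAdd (((p - 1 : ℕ) : ZMod p), (ij.2.val : ZMod p)))
      - η (Multiplicative.ofAdd ((ij.1.val : ZMod p), ((p - 1 : ℕ) : ZMod p)))
      + η (Multiplicative.ofAdd (((p - 1 : ℕ) : ZMod p), ((p - 1 : ℕ) : ZMod p))) := rfl

lemma fin_cast_ne [NeZero p] (i : Fin (p - 1)) :
    ((i.val : ZMod p)) ≠ (((p - 1 : ℕ) : ZMod p)) := by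
  intro h
  have hip : i.val < p := lt_of_lt_of_le i.isLt (Nat.sub_le p 1)
  have hpp : p - 1 < p := Nat.sub_lt (NeZero.pos p) one_pos
  have := congrArg ZMod.val h
  rw [ZMod.val_cast_of_lt hip, ZMod.val_cast_of_lt hpp] at this
  exact absurd this (Nat.ne_of_lt i.isLt)

lemma fin_cast_inj [NeZero p] {i i' : Fin (p - 1)} (h : ((i.val : ZMod p)) = ((i'.val : ZMod p))) :
    i = i' := by
  have hip : i.val < p := lt_of_lt_of_le i.isLt (Nat.sub_le p 1)
  have hip' : i'.val < p := lt_of_lt_of_le i'.isLt (Nat.sub_le p 1)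
  have := congrArg ZMod.val h
  rw [ZMod.val_cast_of_lt hip, ZMod.val_cast_of_lt hip'] at this
  exact Fin.ext this

lemma psi_surj [NeZero p] : Function.Surjective (psi p) := by
  intro x
  refine ⟨∑ ij : Fin (p - 1) × Fin (p - 1),
    MonoidAlgebra.single
      (Multiplicative.ofAdd ((ij.1.val : ZMod p), (ij.2.val : ZMod p))) (x ij), ?_⟩
  set η := ∑ ij : Fin (p - 1) × Fin (p - 1),
    MonoidAlgebra.single
      (Multiplicative.ofAdd ((ij.1.val : ZMod p), (ij.2.val : ZMod p))) (x ij) with hη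
  funext kl
  rw [psi_apply]
  have e1 : η (Multiplicative.ofAdd ((kl.1.val : ZMod p), (kl.2.val : ZMod p))) = x kl := by
    rw [hη, sum_single_apply]
    rw [Finset.sum_eq_single kl]
    · simp
    · intro ij _ hne
      rw [if_neg]
      intro hcon
      apply hne
      have : ((ij.1.val : ZMod p), (ij.2.val : ZMod p))
          = ((kl.1.val : ZMod p), (kl.2.val : ZMod p)) := by
        exact Multiplicative.ofAdd.injective hcon
      rw [Prod.ext_iff] at this
      exact Prod.ext (fin_cast_inj this.1) (fin_cast_inj this.2)
    · simp
  have e2 : ∀ b : ZMod p, η (Multiplicative.ofAdd (((p - 1 : ℕ) : ZMod p), b)) = 0 := by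
    intro b
    rw [hη, sum_single_apply]
    apply Finset.sum_eq_zero
    intro ij _
    rw [if_neg]
    intro hcon
    have := (Prod.ext_iff.1 (Multiplicative.ofAdd.injective hcon)).1
    exact fin_cast_ne ij.1 this
  have e3 : ∀ a : ZMod p, η (Multiplicative.ofAdd (a, ((p - 1 : ℕ) : ZMod p))) = 0 := by
    intro a
    rw [hη, sum_single_apply]
    apply Finset.sum_eq_zero
    intro ij _
    rw [if_neg]
    intro hcon
    have := (Prod.ext_iff.1 (Multiplicative.ofAdd.injective hcon)).2
    exact fin_cast_ne ij.2 this
  rw [e1, e2, e3, e2]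
  ring

lemma mul_tau_pow1 (f : GA p) (hf : f * τ p (1, 0) = f) (k : ℕ) :
    f * τ p ((k : ZMod p), 0) = f := by
  induction k with
  | zero =>
    have : ((((0 : ℕ) : ZMod p)), (0 : ZMod p)) = (0 : ZMod p × ZMod p) := by simp
    rw [this, tau_zero, mul_one]
  | succ k ih =>
    have : (((k + 1 : ℕ) : ZMod p), (0 : ZMod p))
        = ((k : ZMod p), (0 : ZMod p)) + (1, 0) := by
      simp [Prod.ext_iff]
    rw [this, ← tau_mul, ← mul_assoc, ih, hf]

lemma mul_tau_pow2 (f : GA p) (hf : f * τ p (0, 1) = f) (k : ℕ) :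
    f * τ p (0, (k : ZMod p)) = f := by
  induction k with
  | zero =>
    have : ((0 : ZMod p), ((0 : ℕ) : ZMod p)) = (0 : ZMod p × ZMod p) := by simp
    rw [this, tau_zero, mul_one]
  | succ k ih =>
    have : ((0 : ZMod p), ((k + 1 : ℕ) : ZMod p))
        = ((0 : ZMod p), (k : ZMod p)) + (0, 1) := by
      simp [Prod.ext_iff]
    rw [this, ← tau_mul, ← mul_assoc, ih, hf]

lemma const1 [NeZero p] (f : GA p) (hf : f * τ p (1, 0) = f) (v : ZMod p × ZMod p) :
    f (Multiplicative.ofAdd v) = f (Multiplicative.ofAdd (0, v.2)) := by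
  have h := mul_tau_pow1 f hf v.1.val
  have hv : ((v.1.val : ZMod p), (0 : ZMod p)) = (v.1, 0) := by
    simp [ZMod.natCast_val, ZMod.cast_id]
  rw [hv] at h
  calc f (Multiplicative.ofAdd v) = (f * τ p (v.1, 0)) (Multiplicative.ofAdd v) := by rw [h]
    _ = f (Multiplicative.ofAdd (v - (v.1, 0))) := mul_tau_apply f _ _
    _ = f (Multiplicative.ofAdd (0, v.2)) := by
        have hv2 : v - (v.1, 0) = ((0 : ZMod p), v.2) := by simp [Prod.ext_iff]
        rw [hv2]

lemma const2 [NeZero p] (f : GA p) (hf : f * τ p (0, 1) = f) (v : ZMod p × ZMod p) :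
    f (Multiplicative.ofAdd v) = f (Multiplicative.ofAdd (v.1, 0)) := by
  have h := mul_tau_pow2 f hf v.2.val
  have hv : ((0 : ZMod p), (v.2.val : ZMod p)) = (0, v.2) := by
    simp [ZMod.natCast_val, ZMod.cast_id]
  rw [hv] at h
  calc f (Multiplicative.ofAdd v) = (f * τ p (0, v.2)) (Multiplicative.ofAdd v) := by rw [h]
    _ = f (Multiplicative.ofAdd (v - (0, v.2))) := mul_tau_apply f _ _
    _ = f (Multiplicative.ofAdd (v.1, 0)) := by
        have hv2 : v - (0, v.2) = (v.1, (0 : ZMod p)) := by simp [Prod.ext_iff]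
        rw [hv2]

lemma psi_span_zero [NeZero p] (η : GA p)
    (hη : η ∈ Ideal.span ({tr p (1, 0), tr p (0, 1)} : Set (GA p))) :
    psi p η = 0 := by
  rw [Ideal.mem_span_pair] at hη
  obtain ⟨u, v, rfl⟩ := hη
  have h1 : ∀ w : ZMod p × ZMod p, (u * tr p (1, 0)) (Multiplicative.ofAdd w)
      = (u * tr p (1, 0)) (Multiplicative.ofAdd (0, w.2)) := by
    intro w
    apply const1
    rw [mul_assoc, tr_mul_tau]
  have h2 : ∀ w : ZMod p × ZMod p, (v * tr p (0, 1)) (Multiplicative.ofAdd w)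
      = (v * tr p (0, 1)) (Multiplicative.ofAdd (w.1, 0)) := by
    intro w
    apply const2
    rw [mul_assoc, tr_mul_tau]
  funext ij
  have : psi p (u * tr p (1, 0) + v * tr p (0, 1)) ij
      = psi p (u * tr p (1, 0)) ij + psi p (v * tr p (0, 1)) ij := by
    rw [map_add]; rfl
  rw [this, psi_apply, psi_apply,
    h1 ((ij.1.val : ZMod p), (ij.2.val : ZMod p)),
    h1 (((p - 1 : ℕ) : ZMod p), (ij.2.val : ZMod p)),
    h1 ((ij.1.val : ZMod p), ((p - 1 : ℕ) : ZMod p)),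
    h1 (((p - 1 : ℕ) : ZMod p), ((p - 1 : ℕ) : ZMod p)),
    h2 ((ij.1.val : ZMod p), (ij.2.val : ZMod p)),
    h2 (((p - 1 : ℕ) : ZMod p), (ij.2.val : ZMod p)),
    h2 ((ij.1.val : ZMod p), ((p - 1 : ℕ) : ZMod p)),
    h2 (((p - 1 : ℕ) : ZMod p), ((p - 1 : ℕ) : ZMod p))]
  show _ = (0 : ℤ)
  ring

lemma psi_zero_mem_span [NeZero p] (η : GA p) (hψ : psi p η = 0) :
    η ∈ Ideal.span ({tr p (1, 0), tr p (0, 1)} : Set (GA p)) := by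
  apply mem_span_of_rect η ((((p - 1 : ℕ) : ZMod p)), (((p - 1 : ℕ) : ZMod p)))
  rintro ⟨a, b⟩
  simp only
  by_cases h1 : a = ((p - 1 : ℕ) : ZMod p)
  · rw [h1]; ring
  by_cases h2 : b = ((p - 1 : ℕ) : ZMod p)
  · rw [h2]; ring
  have hpp : p - 1 < p := Nat.sub_lt (NeZero.pos p) one_pos
  have ha : a.val < p - 1 := by
    have hle : a.val ≤ p - 1 := Nat.le_pred_of_lt (ZMod.val_lt a)
    refine lt_of_le_of_ne hle fun hco => h1 ?_
    rw [← hco]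
    simp [ZMod.natCast_val, ZMod.cast_id]
  have hb : b.val < p - 1 := by
    have hle : b.val ≤ p - 1 := Nat.le_pred_of_lt (ZMod.val_lt b)
    refine lt_of_le_of_ne hle fun hco => h2 ?_
    rw [← hco]
    simp [ZMod.natCast_val, ZMod.cast_id]
  have h0 := congrFun hψ (⟨a.val, ha⟩, ⟨b.val, hb⟩)
  rw [psi_apply] at h0
  simp only [Pi.zero_apply] at h0
  simp only [ZMod.natCast_val, ZMod.cast_id] at h0
  linarith [h0]

lemma ker_psi_eq [NeZero p] :
    LinearMap.ker (psi p)
      = LinearMap.ker (LinearMap.mulRight ℤ ((τ p (1, 0) - 1) * (τ p (0, 1) - 1))) := by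
  ext η
  simp only [LinearMap.mem_ker, LinearMap.mulRight_apply]
  constructor
  · intro h
    exact span_mul_zero η (psi_zero_mem_span η h)
  · intro h
    exact psi_span_zero η (mul_zero_mem_span η h)


theorem stmt11 (p : ℕ) [NeZero p] (hp : p.Prime) (hodd : Odd p) :
    (∀ η : GA p, η * ((τ p (1, 0) - 1) * (τ p (0, 1) - 1)) = 0 ↔
      η ∈ Ideal.span ({tr p (1, 0), tr p (0, 1)} : Set (GA p))) ∧
    Nonempty (Module.Basis (Fin ((p - 1) ^ 2)) ℤ
      (LinearMap.range (LinearMap.mulRight ℤ ((τ p (1, 0) - 1) * (τ p (0, 1) - 1))))) := by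
  constructor
  · intro η
    exact ⟨fun h => mul_zero_mem_span η h, fun h => span_mul_zero η h⟩
  · set F := LinearMap.mulRight ℤ ((τ p (1, 0) - 1) * (τ p (0, 1) - 1)) with hF
    have e1 : (GA p ⧸ LinearMap.ker F) ≃ₗ[ℤ] LinearMap.range F := F.quotKerEquivRange
    have e2 : (GA p ⧸ LinearMap.ker (psi p)) ≃ₗ[ℤ] (Fin (p - 1) × Fin (p - 1) → ℤ) :=
      (psi p).quotKerEquivRange.trans
        (LinearEquiv.ofTop _ (LinearMap.range_eq_top.2 psi_surj))
    have e3 : (GA p ⧸ LinearMap.ker (psi p)) ≃ₗ[ℤ] (GA p ⧸ LinearMap.ker F) :=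
      Submodule.quotEquivOfEq _ _ (ker_psi_eq (p := p))
    let e : (Fin (p - 1) × Fin (p - 1) → ℤ) ≃ₗ[ℤ] LinearMap.range F :=
      e2.symm.trans (e3.trans e1)
    exact ⟨((Pi.basisFun ℤ (Fin (p - 1) × Fin (p - 1))).map e).reindex
      (finProdFinEquiv.trans (finCongr (pow_two (p - 1)).symm))⟩
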